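/- Let L > 0, c > 0, δ₁ > 0, δ₂ > 0, and let φ : [0,L] → ℝ be bounded and measurable with M := sup_{x∈[0,L]} |φ(x)| > 0. Then for all real-valued p₁, p₂ ∈ H¹([0,L]) and p₃ ∈ L²([0,L]): δ₁ ‖p₁‖²_{H¹} + δ₂ ‖p₂‖²_{H¹} + (c/2) ∫₀^L ( p₃(x) + (2/c) φ(x) p₁(x) )² dx ≥ δ ( ‖p₁‖²_{H¹} + ‖p₂‖²_{H¹} + ‖p₃‖²_{L²} ), where δ = min{ δ₁/2, δ₂, (δ₁/2)(c/(8M))², c/4 } > 0. (This is the coercivity step in the proof of orbital stability: the two cases ‖p₃‖_{L²} ≥ (8M/c)‖p₁‖_{L²} and ‖p₃‖_{L²} ≤ (8M/c)‖p₁‖_{L²} are treated separately.) -/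

import Mathlib

open MeasureTheory

/-- Coercivity step in the orbital stability proof: with
`δ = min{δ₁/2, δ₂, (δ₁/2)(c/(8M))², c/4}` and `M = sup_{[0,L]} |φ| > 0`,
`δ₁‖p₁‖²_{H¹} + δ₂‖p₂‖²_{H¹} + (c/2)∫₀^L (p₃ + (2/c)φ p₁)² ≥
 δ(‖p₁‖²_{H¹} + ‖p₂‖²_{H¹} + ‖p₃‖²_{L²})`. -/
theorem stability_coercivity (L c δ₁ δ₂ M : ℝ) (hL : 0 < L) (hc : 0 < c)
    (hδ₁ : 0 < δ₁) (hδ₂ : 0 < δ₂) (φ : ℝ → ℝ) (hφ : Continuous φ)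
    (hM : M = sSup ((fun x => |φ x|) '' Set.Icc 0 L)) (hM0 : 0 < M) :
    ∀ p₁ p₂ p₃ : ℝ → ℝ, ContDiff ℝ 1 p₁ → ContDiff ℝ 1 p₂ → Continuous p₃ →
      δ₁ * (∫ x in (0:ℝ)..L, ((p₁ x) ^ 2 + (deriv p₁ x) ^ 2))
        + δ₂ * (∫ x in (0:ℝ)..L, ((p₂ x) ^ 2 + (deriv p₂ x) ^ 2))
        + (c / 2) * (∫ x in (0:ℝ)..L, (p₃ x + (2 / c) * φ x * p₁ x) ^ 2)
      ≥ min (min (δ₁ / 2) δ₂) (min ((δ₁ / 2) * (c / (8 * M)) ^ 2) (c / 4)) *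
          ((∫ x in (0:ℝ)..L, ((p₁ x) ^ 2 + (deriv p₁ x) ^ 2))
            + (∫ x in (0:ℝ)..L, ((p₂ x) ^ 2 + (deriv p₂ x) ^ 2))
            + ∫ x in (0:ℝ)..L, (p₃ x) ^ 2) := by
  intro p₁ p₂ p₃ h1 h2 h3
  have hL0 : (0:ℝ) ≤ L := hL.le
  have hc1 : Continuous p₁ := h1.continuous
  have hd1 : Continuous (deriv p₁) := h1.continuous_deriv le_rfl
  have hc2 : Continuous p₂ := h2.continuous
  have hd2 : Continuous (deriv p₂) := h2.continuous_deriv le_rfl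
  have hqc : Continuous (fun x => p₃ x + (2 / c) * φ x * p₁ x) := by
    continuity
  -- sup bound for φ
  have hφM : ∀ x ∈ Set.Icc (0:ℝ) L, |φ x| ≤ M := by
    intro x hx
    rw [hM]
    exact le_csSup (isCompact_Icc.bddAbove_image (hφ.abs.continuousOn))
      ⟨x, hx, rfl⟩
  set K : ℝ := 8 * M ^ 2 / c ^ 2 with hK
  -- pointwise bound
  have hpt : ∀ x ∈ Set.Icc (0:ℝ) L,
      (p₃ x) ^ 2 ≤ 2 * (p₃ x + (2 / c) * φ x * p₁ x) ^ 2 + K * (p₁ x) ^ 2 := by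
    intro x hx
    have habs := abs_le.mp (hφM x hx)
    have hφsq : (φ x) ^ 2 ≤ M ^ 2 := sq_le_sq' habs.1 habs.2
    have hid : 2 * (p₃ x + (2 / c) * φ x * p₁ x) ^ 2 + K * (p₁ x) ^ 2 - (p₃ x) ^ 2
        = (p₃ x + (4 / c) * φ x * p₁ x) ^ 2
          + (8 / c ^ 2) * (M ^ 2 - (φ x) ^ 2) * (p₁ x) ^ 2 := by
      rw [hK]
      field_simp
      ring
    have hnn : 0 ≤ (8 / c ^ 2) * (M ^ 2 - (φ x) ^ 2) * (p₁ x) ^ 2 :=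
      mul_nonneg (mul_nonneg (by positivity) (by linarith)) (sq_nonneg _)
    linarith [sq_nonneg (p₃ x + (4 / c) * φ x * p₁ x)]
  -- integrate the pointwise bound
  have hint3 : IntervalIntegrable (fun x => (p₃ x) ^ 2) volume 0 L :=
    (h3.pow 2).intervalIntegrable 0 L
  have hintq : IntervalIntegrable (fun x => (p₃ x + (2 / c) * φ x * p₁ x) ^ 2) volume 0 L :=
    (hqc.pow 2).intervalIntegrable 0 L
  have hint1 : IntervalIntegrable (fun x => (p₁ x) ^ 2) volume 0 L :=
    (hc1.pow 2).intervalIntegrable 0 L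
  have hCle : (∫ x in (0:ℝ)..L, (p₃ x) ^ 2)
      ≤ 2 * (∫ x in (0:ℝ)..L, (p₃ x + (2 / c) * φ x * p₁ x) ^ 2)
        + K * (∫ x in (0:ℝ)..L, (p₁ x) ^ 2) := by
    have := intervalIntegral.integral_mono_on hL0 hint3
      ((hintq.const_mul 2).add (hint1.const_mul K)) hpt
    rwa [intervalIntegral.integral_add (hintq.const_mul 2) (hint1.const_mul K),
      intervalIntegral.integral_const_mul, intervalIntegral.integral_const_mul] at this
  -- split H¹ norm of p₁
  have hAsplit : (∫ x in (0:ℝ)..L, ((p₁ x) ^ 2 + (deriv p₁ x) ^ 2))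
      = (∫ x in (0:ℝ)..L, (p₁ x) ^ 2) + ∫ x in (0:ℝ)..L, (deriv p₁ x) ^ 2 :=
    intervalIntegral.integral_add hint1 ((hd1.pow 2).intervalIntegrable 0 L)
  -- nonnegativity of all the integrals
  have hQ0 : 0 ≤ ∫ x in (0:ℝ)..L, (p₃ x + (2 / c) * φ x * p₁ x) ^ 2 :=
    intervalIntegral.integral_nonneg hL0 (fun x _ => sq_nonneg _)
  have hI10 : 0 ≤ ∫ x in (0:ℝ)..L, (p₁ x) ^ 2 :=
    intervalIntegral.integral_nonneg hL0 (fun x _ => sq_nonneg _)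
  have hI1d0 : 0 ≤ ∫ x in (0:ℝ)..L, (deriv p₁ x) ^ 2 :=
    intervalIntegral.integral_nonneg hL0 (fun x _ => sq_nonneg _)
  have hB0 : 0 ≤ ∫ x in (0:ℝ)..L, ((p₂ x) ^ 2 + (deriv p₂ x) ^ 2) :=
    intervalIntegral.integral_nonneg hL0 (fun x _ => by positivity)
  have hC0 : 0 ≤ ∫ x in (0:ℝ)..L, (p₃ x) ^ 2 :=
    intervalIntegral.integral_nonneg hL0 (fun x _ => sq_nonneg _)
  set δ : ℝ := min (min (δ₁ / 2) δ₂) (min ((δ₁ / 2) * (c / (8 * M)) ^ 2) (c / 4)) with hδ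
  have hδ0 : 0 ≤ δ := by
    have : 0 < (δ₁ / 2) * (c / (8 * M)) ^ 2 := by positivity
    simp only [hδ, le_min_iff]
    refine ⟨⟨by linarith, hδ₂.le⟩, ⟨this.le, by linarith⟩⟩
  have hδ1 : δ ≤ δ₁ / 2 := le_trans (min_le_left _ _) (min_le_left _ _)
  have hδ2 : δ ≤ δ₂ := le_trans (min_le_left _ _) (min_le_right _ _)
  have hδ4 : δ ≤ c / 4 := le_trans (min_le_right _ _) (min_le_right _ _)
  have hδK : δ * K ≤ δ₁ / 2 := by
    have h3' : δ ≤ (δ₁ / 2) * (c / (8 * M)) ^ 2 :=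
      le_trans (min_le_right _ _) (min_le_left _ _)
    have hK0 : 0 ≤ K := by positivity
    have : δ * K ≤ ((δ₁ / 2) * (c / (8 * M)) ^ 2) * K :=
      mul_le_mul_of_nonneg_right h3' hK0
    have heq : ((δ₁ / 2) * (c / (8 * M)) ^ 2) * K = δ₁ / 16 := by
      rw [hK]
      field_simp [hK]
      ring
    linarith
  rw [hAsplit]
  set I1 := ∫ x in (0:ℝ)..L, (p₁ x) ^ 2
  set I1d := ∫ x in (0:ℝ)..L, (deriv p₁ x) ^ 2
  set B := ∫ x in (0:ℝ)..L, ((p₂ x) ^ 2 + (deriv p₂ x) ^ 2)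
  set Q := ∫ x in (0:ℝ)..L, (p₃ x + (2 / c) * φ x * p₁ x) ^ 2
  set C := ∫ x in (0:ℝ)..L, (p₃ x) ^ 2
  have h1' : δ * C ≤ δ * (2 * Q + K * I1) := mul_le_mul_of_nonneg_left hCle hδ0
  nlinarith [mul_le_mul_of_nonneg_right hδ4 hQ0, mul_le_mul_of_nonneg_right hδK hI10,
    mul_le_mul_of_nonneg_right hδ1 (add_nonneg hI10 hI1d0),
    mul_le_mul_of_nonneg_right hδ2 hB0]
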